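/- Let n, k be integers with 1 ≤ k ≤ n, and let p and q be motifs of n with exactly k parts such that p is a major motif and p[1] = q[1]. Then p dominates q. -/

import Mathlib

/-- A motif of `n`: a non-increasing sequence (list) of positive integers summing to `n`. -/
def IsMotif (n : ℕ) (p : List ℕ) : Prop :=
  p.Pairwise (· ≥ ·) ∧ (∀ x ∈ p, 0 < x) ∧ p.sum = n

/-- `p` dominates `q`. -/
def Dominates (p q : List ℕ) : Prop :=
  ∀ t, 1 ≤ t → t ≤ min p.length q.length → (q.take t).sum ≤ (p.take t).sum

/-- The major motif of `n` with `k` parts and first entry `lam`: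
`β = ⌊(n−k)/(lam−1)⌋` copies of `lam`, then `n − β·lam − (k−β−1)`,
then `k − β − 1` ones. -/
def majorMotif (n k lam : ℕ) : List ℕ :=
  List.replicate ((n - k) / (lam - 1)) lam ++
    (n - ((n - k) / (lam - 1)) * lam - (k - (n - k) / (lam - 1) - 1)) ::
      List.replicate (k - (n - k) / (lam - 1) - 1) 1

/-- `p` is a major motif of `n` with `k` parts: for some admissible first
entry `lam` (with `1 < lam` and `⌈n/k⌉ ≤ lam ≤ n − k + 1`), `p = majorMotif n k lam`. -/
def IsMajorMotif (n k : ℕ) (p : List ℕ) : Prop :=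
  ∃ lam : ℕ, 1 < lam ∧ (n + k - 1) / k ≤ lam ∧ lam ≤ n - k + 1 ∧
    p = majorMotif n k lam

/-- a major motif of `n` with `k` parts dominates every motif of
`n` with `k` parts having the same first entry. -/
theorem strength_stmt_9 {n k : ℕ} (h1 : 1 ≤ k) (h2 : k ≤ n)
    (p q : List ℕ) (hp : IsMotif n p) (hq : IsMotif n q)
    (hplen : p.length = k) (hqlen : q.length = k)
    (hmaj : IsMajorMotif n k p) (hfirst : p.headI = q.headI) :
    Dominates p q := by
  obtain ⟨hsortp, hposp, hsump⟩ := hp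
  obtain ⟨hsortq, hposq, hsumq⟩ := hq
  obtain ⟨lam, hlam1, -, -, hpeq⟩ := hmaj
  intro t ht1 ht2
  rw [hplen, hqlen, min_self] at ht2
  set β := (n - k) / (lam - 1) with hβ
  set r := n - β * lam - (k - β - 1) with hr
  set m := k - β - 1 with hm
  have hpe : p = List.replicate β lam ++ r :: List.replicate m 1 := hpeq
  have hlen : β + (m + 1) = k := by
    have h := hplen
    rw [hpe] at h
    simpa using h
  have hsum_q : (q.take t).sum + (q.drop t).sum = n := by
    rw [← List.sum_append, List.take_append_drop, hsumq]
  by_cases hc : t ≤ β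
  · -- q entries are ≤ lam
    have hphead : p.headI = lam := by
      rw [hpe]
      cases hb : β with
      | zero => omega
      | succ b => simp [List.replicate_succ]
    have hqb : ∀ x ∈ q, x ≤ lam := by
      intro x hx
      have hxh : x ≤ q.headI := by
        cases q with
        | nil => simp at hx
        | cons a l =>
          rcases List.mem_cons.mp hx with h | h
          · simp [h]
          · exact (List.pairwise_cons.mp hsortq).1 x h
      rw [← hfirst, hphead] at hxh
      exact hxh
    have hlenq : (q.take t).length = t := by
      rw [List.length_take, hqlen]; omega
    have h1 : (q.take t).sum ≤ t * lam := by
      calc (q.take t).sum ≤ (q.take t).length • lam :=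
            List.sum_le_card_nsmul _ lam (fun x hx => hqb x (List.take_subset t q hx))
        _ = t * lam := by rw [hlenq, smul_eq_mul]
    have h2 : (p.take t).sum = t * lam := by
      rw [hpe, List.take_append_of_le_length (by simpa using hc), List.take_replicate,
        List.sum_replicate, min_eq_left hc, smul_eq_mul]
    omega
  · -- t > β : the tail of p from position t is all ones
    have htβ : β + 1 ≤ t := by omega
    have hdp : p.drop t = List.replicate (k - t) 1 := by
      rw [hpe]
      have ht' : t = (List.replicate β lam).length + (t - β) := by
        simp; omega
      rw [ht', List.drop_length_add_append]
      have ht'' : t - β = (t - β - 1) + 1 := by omega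
      rw [ht'', List.drop_succ_cons, List.drop_replicate]
      congr 1
      omega
    have hsum_p : (p.take t).sum + (k - t) = n := by
      have := hsump
      rw [← List.take_append_drop t p, List.sum_append, hdp, List.sum_replicate,
        smul_eq_mul, mul_one] at this
      exact this
    have hdq : k - t ≤ (q.drop t).sum := by
      have hlq : (q.drop t).length = k - t := by rw [List.length_drop, hqlen]
      calc k - t = (q.drop t).length • 1 := by rw [hlq, smul_eq_mul, mul_one]
        _ ≤ (q.drop t).sum :=
            List.card_nsmul_le_sum _ 1 (fun x hx => hposq x (List.drop_subset t q hx))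
    omega
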